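/- Let n ≥ 1 and let C ⊆ ℝⁿ be a closed strongly convex cone with apex at the origin which is n-dimensional (has nonempty interior). Let Γ₁ and Γ₂ be cobounded C-convex regions. Then covol(Γ₁)^{1/n} + covol(Γ₂)^{1/n} ≥ covol(Γ₁ + Γ₂)^{1/n}, where Γ₁ + Γ₂ is the Minkowski sum. -/

import Mathlib

open MeasureTheory Pointwise
open Set
open scoped ENNReal

lemma bmc_iSup_mul_iSup (a b : ℕ → ℝ≥0∞) (ha : Monotone a) (hb : Monotone b) :
    (⨆ k, a k) * (⨆ k, b k) = ⨆ k, a k * b k := by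
  apply le_antisymm
  · rw [ENNReal.iSup_mul]
    refine iSup_le fun k => ?_
    rw [ENNReal.mul_iSup]
    refine iSup_le fun j => ?_
    calc a k * b j ≤ a (max k j) * b (max k j) :=
          mul_le_mul' (ha (le_max_left _ _)) (hb (le_max_right _ _))
      _ ≤ ⨆ m, a m * b m := le_iSup (fun m => a m * b m) (max k j)
  · exact iSup_le fun k => mul_le_mul' (le_iSup a k) (le_iSup b k)

lemma bmc_iSup_rpow (x : ℕ → ℝ≥0∞) {p : ℝ} (hp : 0 < p) :
    (⨆ k, x k) ^ p = ⨆ k, x k ^ p := by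
  apply le_antisymm
  · have h1 : (⨆ k, x k) ≤ (⨆ k, x k ^ p) ^ p⁻¹ := by
      refine iSup_le fun k => ?_
      have : x k = (x k ^ p) ^ p⁻¹ := by
        rw [← ENNReal.rpow_mul, mul_inv_cancel₀ hp.ne', ENNReal.rpow_one]
      rw [this]
      exact ENNReal.rpow_le_rpow (le_iSup (fun k => x k ^ p) k) (by positivity)
    calc (⨆ k, x k) ^ p ≤ ((⨆ k, x k ^ p) ^ p⁻¹) ^ p := ENNReal.rpow_le_rpow h1 hp.le
      _ = ⨆ k, x k ^ p := by rw [← ENNReal.rpow_mul, inv_mul_cancel₀ hp.ne', ENNReal.rpow_one]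
  · exact iSup_le fun k => ENNReal.rpow_le_rpow (le_iSup x k) hp.le

/-- One-dimensional superadditivity of Lebesgue measure under Minkowski sum. -/
lemma bmc_one_dim_sum (A B : Set ℝ) (hA : MeasurableSet A) (hB : MeasurableSet B)
    (hA' : A.Nonempty) (hB' : B.Nonempty) :
    volume A + volume B ≤ volume (A + B) := by
  -- compact case first
  have compact_case : ∀ K L : Set ℝ, IsCompact K → IsCompact L → K.Nonempty → L.Nonempty →
      volume K + volume L ≤ volume (K + L) := by
    intro K L hK hL hKne hLne
    set a := sSup K with ha
    set b := sInf L with hb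
    have haK : a ∈ K := hK.sSup_mem hKne
    have hbL : b ∈ L := hL.sInf_mem hLne
    have hX : (b +ᵥ K) ∪ (a +ᵥ L) ⊆ K + L := by
      rintro x (⟨k, hk, rfl⟩ | ⟨l, hl, rfl⟩)
      · exact ⟨k, hk, b, hbL, by simp [add_comm]⟩
      · exact ⟨a, haK, l, hl, rfl⟩
    have hinter : (b +ᵥ K) ∩ (a +ᵥ L) ⊆ {a + b} := by
      rintro x ⟨⟨k, hk, rfl⟩, ⟨l, hl, hx⟩⟩
      have h1 : b + k ≤ a + b := by
        have := le_csSup hK.bddAbove hk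
        simpa [add_comm] using add_le_add_right this b
      have h2 : a + b ≤ b + k := by
        have h3 := csInf_le hL.bddBelow hl
        have : a + b ≤ a + l := add_le_add_right h3 a
        calc a + b ≤ a + l := this
          _ = b + k := by simpa using hx
      simp [le_antisymm h1 h2, add_comm]
    have hmL : MeasurableSet (a +ᵥ L) := hL.isClosed.measurableSet.const_vadd a
    have h5 : volume ((b +ᵥ K) ∩ (a +ᵥ L)) = 0 :=
      le_antisymm (le_trans (measure_mono hinter) (by simp)) zero_le
    calc volume K + volume L = volume (b +ᵥ K) + volume (a +ᵥ L) := by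
          rw [measure_vadd, measure_vadd]
      _ = volume ((b +ᵥ K) ∪ (a +ᵥ L)) + volume ((b +ᵥ K) ∩ (a +ᵥ L)) :=
          (measure_union_add_inter _ hmL).symm
      _ = volume ((b +ᵥ K) ∪ (a +ᵥ L)) := by rw [h5, add_zero]
      _ ≤ volume (K + L) := measure_mono hX
  -- reduce to compact case
  rcases hA' with ⟨a0, ha0⟩
  rcases hB' with ⟨b0, hb0⟩
  by_cases hAinf : volume A = ⊤
  · have : volume (A + B) = ⊤ := by
      have hsub : b0 +ᵥ A ⊆ A + B := by
        rintro x ⟨y, hy, rfl⟩; exact ⟨y, hy, b0, hb0, by simp [add_comm]⟩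
      have h6 : volume (b0 +ᵥ A) ≤ volume (A + B) := measure_mono hsub
      rw [measure_vadd] at h6
      exact top_le_iff.mp (hAinf ▸ h6)
    simp [this]
  by_cases hBinf : volume B = ⊤
  · have : volume (A + B) = ⊤ := by
      have hsub : a0 +ᵥ B ⊆ A + B := by
        rintro x ⟨y, hy, rfl⟩; exact ⟨a0, ha0, y, hy, rfl⟩
      have h6 : volume (a0 +ᵥ B) ≤ volume (A + B) := measure_mono hsub
      rw [measure_vadd] at h6
      exact top_le_iff.mp (hBinf ▸ h6)
    simp [this]
  refine ENNReal.le_of_forall_pos_le_add fun ε hε _ => ?_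
  obtain ⟨K, hKA, hKc, hKv⟩ : ∃ K ⊆ A, IsCompact K ∧ volume A ≤ volume K + (ε / 2 : ℝ≥0∞) := by
    obtain ⟨K, hKA, hKc, hKv⟩ := hA.exists_isCompact_diff_lt hAinf (by simp [hε.ne'] : (ε/2 : ℝ≥0∞) ≠ 0)
    refine ⟨K, hKA, hKc, ?_⟩
    calc volume A ≤ volume (A \ K) + volume K := by
          rw [← measure_union (disjoint_sdiff_left) hKc.isClosed.measurableSet]
          exact measure_mono (by simp [Set.diff_union_of_subset hKA])
      _ ≤ volume K + ε / 2 := by rw [add_comm]; exact add_le_add_right hKv.le _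
  obtain ⟨L, hLB, hLc, hLv⟩ : ∃ L ⊆ B, IsCompact L ∧ volume B ≤ volume L + (ε / 2 : ℝ≥0∞) := by
    obtain ⟨L, hLB, hLc, hLv⟩ := hB.exists_isCompact_diff_lt hBinf (by simp [hε.ne'] : (ε/2 : ℝ≥0∞) ≠ 0)
    refine ⟨L, hLB, hLc, ?_⟩
    calc volume B ≤ volume (B \ L) + volume L := by
          rw [← measure_union (disjoint_sdiff_left) hLc.isClosed.measurableSet]
          exact measure_mono (by simp [Set.diff_union_of_subset hLB])
      _ ≤ volume L + ε / 2 := by rw [add_comm]; exact add_le_add_right hLv.le _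
  -- K or L may be empty; enlarge with a point
  have hKc' : IsCompact (K ∪ {a0}) := hKc.union isCompact_singleton
  have hLc' : IsCompact (L ∪ {b0}) := hLc.union isCompact_singleton
  have key := compact_case (K ∪ {a0}) (L ∪ {b0}) hKc' hLc' ⟨a0, Or.inr rfl⟩ ⟨b0, Or.inr rfl⟩
  have hsub : (K ∪ {a0}) + (L ∪ {b0}) ⊆ A + B :=
    Set.add_subset_add (by rw [Set.union_singleton]; exact Set.insert_subset ha0 hKA)
      (by rw [Set.union_singleton]; exact Set.insert_subset hb0 hLB)
  calc volume A + volume B ≤ (volume K + ε/2) + (volume L + ε/2) := add_le_add hKv hLv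
    _ = volume K + volume L + ε := by
        rw [add_add_add_comm, ENNReal.add_halves]
    _ ≤ volume (K ∪ {a0}) + volume (L ∪ {b0}) + ε := by
        gcongr <;> exact Set.subset_union_left
    _ ≤ volume ((K ∪ {a0}) + (L ∪ {b0})) + ε := add_le_add_left key ε
    _ ≤ volume (A + B) + ε := add_le_add_left (measure_mono hsub) ε

/-- Layer cake for functions bounded by 1. -/
lemma bmc_layercake (f : ℝ → ℝ≥0∞) (hf : Measurable f) (hle : ∀ x, f x ≤ 1) :
    ∫⁻ x, f x = ∫⁻ s in Ioo (0:ℝ) 1, volume {x | ENNReal.ofReal s < f x} := by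
  have hne : ∀ x, f x ≠ ⊤ := fun x => (lt_of_le_of_lt (hle x) (by norm_num)).ne
  have h1 : (∫⁻ x, f x) = ∫⁻ x, ENNReal.ofReal ((f x).toReal) :=
    lintegral_congr fun x => (ENNReal.ofReal_toReal (hne x)).symm
  rw [h1, lintegral_eq_lintegral_meas_lt volume (ae_of_all _ fun x => ENNReal.toReal_nonneg)
    hf.ennreal_toReal.aemeasurable]
  have hdisj : Disjoint (Ioo (0:ℝ) 1) (Ici (1:ℝ)) :=
    Set.disjoint_left.mpr fun a ha hb => absurd ha.2 (not_lt.mpr hb)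
  rw [← Ioo_union_Ici_eq_Ioi (zero_lt_one (α := ℝ)), lintegral_union measurableSet_Ici hdisj]
  have h2 : (∫⁻ s in Ici (1:ℝ), volume {x | s < (f x).toReal}) = 0 := by
    have hz : ∀ s ∈ Ici (1:ℝ), volume {x : ℝ | s < (f x).toReal} = (fun _ => (0:ℝ≥0∞)) s := by
      intro s hs
      have : {x : ℝ | s < (f x).toReal} = ∅ := by
        apply eq_empty_of_forall_notMem
        intro x hx
        have h3 : (f x).toReal ≤ 1 := by
          have := ENNReal.toReal_mono (by norm_num) (hle x)
          simpa using this
        exact absurd (lt_of_lt_of_le hx h3) (not_lt.mpr hs)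
      simp [this]
    rw [setLIntegral_congr_fun measurableSet_Ici hz, lintegral_zero]
  rw [h2, add_zero]
  apply setLIntegral_congr_fun measurableSet_Ioo
  intro s hs
  beta_reduce
  congr 1
  ext x
  simp only [mem_setOf_eq]
  rw [ENNReal.ofReal_lt_iff_lt_toReal hs.1.le (hne x)]

lemma bmc_amgm (X Y : ℝ≥0∞) (hX : X ≠ ⊤) (hY : Y ≠ ⊤) {t : ℝ} (ht : 0 < t) (ht1 : t < 1) :
    X ^ (1 - t) * Y ^ t ≤ ENNReal.ofReal (1 - t) * X + ENNReal.ofReal t * Y := by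
  have ht' : 0 < 1 - t := by linarith
  have hreal : X.toReal ^ (1 - t) * Y.toReal ^ t ≤ (1 - t) * X.toReal + t * Y.toReal :=
    Real.geom_mean_le_arith_mean2_weighted ht'.le ht.le ENNReal.toReal_nonneg
      ENNReal.toReal_nonneg (by ring)
  have hlhs : X ^ (1 - t) * Y ^ t = ENNReal.ofReal (X.toReal ^ (1 - t) * Y.toReal ^ t) := by
    rw [ENNReal.ofReal_mul (by positivity), ← ENNReal.ofReal_rpow_of_nonneg
      ENNReal.toReal_nonneg ht'.le, ← ENNReal.ofReal_rpow_of_nonneg ENNReal.toReal_nonneg ht.le,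
      ENNReal.ofReal_toReal hX, ENNReal.ofReal_toReal hY]
  rw [hlhs]
  calc ENNReal.ofReal (X.toReal ^ (1 - t) * Y.toReal ^ t)
      ≤ ENNReal.ofReal ((1 - t) * X.toReal + t * Y.toReal) := ENNReal.ofReal_le_ofReal hreal
    _ = ENNReal.ofReal ((1 - t) * X.toReal) + ENNReal.ofReal (t * Y.toReal) :=
        ENNReal.ofReal_add (by positivity) (by positivity)
    _ = ENNReal.ofReal (1 - t) * ENNReal.ofReal X.toReal
        + ENNReal.ofReal t * ENNReal.ofReal Y.toReal := by
        rw [ENNReal.ofReal_mul ht'.le, ENNReal.ofReal_mul ht.le]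
    _ = ENNReal.ofReal (1 - t) * X + ENNReal.ofReal t * Y := by
        rw [ENNReal.ofReal_toReal hX, ENNReal.ofReal_toReal hY]

/-- 1-D Prékopa–Leindler, auxiliary bounded version. -/
lemma bmc_PL1_aux {t : ℝ} (ht : 0 < t) (ht1 : t < 1)
    (f g h : ℝ → ℝ≥0∞) (hf : Measurable f) (hg : Measurable g) (hh : Measurable h)
    (hfsup : (⨆ x, f x) ≠ ⊤) (hgsup : (⨆ x, g x) ≠ ⊤)
    (hfint : (∫⁻ x, f x) ≠ ⊤) (hgint : (∫⁻ x, g x) ≠ ⊤)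
    (hyp : ∀ x y : ℝ, f x ^ (1 - t) * g y ^ t ≤ h ((1 - t) • x + t • y)) :
    (∫⁻ x, f x) ^ (1 - t) * (∫⁻ x, g x) ^ t ≤ ∫⁻ x, h x := by
  have ht' : 0 < 1 - t := by linarith
  set M := ⨆ x, f x with hM
  set N := ⨆ x, g x with hN
  by_cases hM0 : M = 0
  · have hf0 : ∀ x, f x = 0 := fun x => le_antisymm (hM0 ▸ le_iSup f x) zero_le
    have : (∫⁻ x, f x) = 0 := by simp [hf0]
    rw [this, ENNReal.zero_rpow_of_pos ht', zero_mul]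
    exact zero_le
  by_cases hN0 : N = 0
  · have hg0 : ∀ x, g x = 0 := fun x => le_antisymm (hN0 ▸ le_iSup g x) zero_le
    have : (∫⁻ x, g x) = 0 := by simp [hg0]
    rw [this, ENNReal.zero_rpow_of_pos ht, mul_zero]
    exact zero_le
  set c := M ^ (1 - t) * N ^ t with hc
  have hc0 : c ≠ 0 := by
    apply mul_ne_zero <;>
      simp [ENNReal.rpow_eq_zero_iff, hM0, hN0, hfsup, hgsup, ht.ne', ht'.ne', ht, ht']
  have hctop : c ≠ ⊤ :=
    ENNReal.mul_ne_top (ENNReal.rpow_ne_top_of_nonneg ht'.le hfsup)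
      (ENNReal.rpow_ne_top_of_nonneg ht.le hgsup)
  set f' : ℝ → ℝ≥0∞ := fun x => M⁻¹ * f x with hf'
  set g' : ℝ → ℝ≥0∞ := fun x => N⁻¹ * g x with hg'
  set h' : ℝ → ℝ≥0∞ := fun x => c⁻¹ * h x with hh'
  have hf'm : Measurable f' := hf.const_mul _
  have hg'm : Measurable g' := hg.const_mul _
  have hh'm : Measurable h' := hh.const_mul _
  have hf'le : ∀ x, f' x ≤ 1 := fun x => by
    rw [hf']
    calc M⁻¹ * f x ≤ M⁻¹ * M := mul_le_mul_right (le_iSup f x) _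
      _ ≤ 1 := by rw [ENNReal.inv_mul_cancel hM0 hfsup]
  have hg'le : ∀ x, g' x ≤ 1 := fun x => by
    rw [hg']
    calc N⁻¹ * g x ≤ N⁻¹ * N := mul_le_mul_right (le_iSup g x) _
      _ ≤ 1 := by rw [ENNReal.inv_mul_cancel hN0 hgsup]
  have hf'sup : (⨆ x, f' x) = 1 := by
    rw [hf']
    simp only [← ENNReal.mul_iSup, ← hM]
    exact ENNReal.inv_mul_cancel hM0 hfsup
  have hg'sup : (⨆ x, g' x) = 1 := by
    rw [hg']
    simp only [← ENNReal.mul_iSup, ← hN]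
    exact ENNReal.inv_mul_cancel hN0 hgsup
  have hyp' : ∀ x y : ℝ, f' x ^ (1 - t) * g' y ^ t ≤ h' ((1 - t) • x + t • y) := by
    intro x y
    rw [hf', hg', hh']
    simp only []
    rw [ENNReal.mul_rpow_of_nonneg _ _ ht'.le, ENNReal.mul_rpow_of_nonneg _ _ ht.le,
      ENNReal.inv_rpow, ENNReal.inv_rpow]
    calc (M ^ (1-t))⁻¹ * f x ^ (1-t) * ((N ^ t)⁻¹ * g y ^ t)
        = (M ^ (1-t))⁻¹ * (N ^ t)⁻¹ * (f x ^ (1-t) * g y ^ t) := by ring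
      _ = c⁻¹ * (f x ^ (1-t) * g y ^ t) := by
          rw [hc, ENNReal.mul_inv (Or.inl (by
            simp [ENNReal.rpow_eq_zero_iff, hM0, hfsup, ht'.ne', ht'])) (Or.inl
            (ENNReal.rpow_ne_top_of_nonneg ht'.le hfsup))]
      _ ≤ c⁻¹ * h ((1 - t) • x + t • y) := mul_le_mul_right (hyp x y) _
  -- superlevel sets
  have key : ∀ s ∈ Ioo (0:ℝ) 1,
      ENNReal.ofReal (1 - t) * volume {x | ENNReal.ofReal s < f' x}
        + ENNReal.ofReal t * volume {x | ENNReal.ofReal s < g' x}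
      ≤ volume {x | ENNReal.ofReal s < h' x} := by
    intro s hs
    set u := ENNReal.ofReal s with hu
    have hu0 : u ≠ 0 := by simp [hu, ENNReal.ofReal_eq_zero, not_le, hs.1]
    have hu1 : u < 1 := by
      rw [hu, ← ENNReal.ofReal_one]
      exact ENNReal.ofReal_lt_ofReal_iff_of_nonneg hs.1.le |>.mpr hs.2
    set A := {x : ℝ | u < f' x} with hA
    set B := {x : ℝ | u < g' x} with hB
    have hAm : MeasurableSet A := hf'm measurableSet_Ioi
    have hBm : MeasurableSet B := hg'm measurableSet_Ioi
    have hAne : A.Nonempty := by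
      have : u < ⨆ x, f' x := hf'sup ▸ hu1
      obtain ⟨x, hx⟩ := lt_iSup_iff.mp this
      exact ⟨x, hx⟩
    have hBne : B.Nonempty := by
      have : u < ⨆ x, g' x := hg'sup ▸ hu1
      obtain ⟨x, hx⟩ := lt_iSup_iff.mp this
      exact ⟨x, hx⟩
    have hsub : (1 - t) • A + t • B ⊆ {x : ℝ | u < h' x} := by
      rintro z ⟨x', ⟨x, hx, rfl⟩, y', ⟨y, hy, rfl⟩, rfl⟩
      refine lt_of_lt_of_le ?_ (hyp' x y)
      have hufin : u ≠ ⊤ := ENNReal.ofReal_ne_top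
      calc u = u ^ (1 - t) * u ^ t := by
            rw [← ENNReal.rpow_add _ _ hu0 hufin]
            norm_num
        _ < f' x ^ (1 - t) * g' y ^ t :=
            ENNReal.mul_lt_mul (ENNReal.rpow_lt_rpow hx ht') (ENNReal.rpow_lt_rpow hy ht)
    calc ENNReal.ofReal (1 - t) * volume A + ENNReal.ofReal t * volume B
        = volume ((1 - t) • A) + volume (t • B) := by
          rw [Measure.addHaar_smul, Measure.addHaar_smul]
          simp [abs_of_pos ht, abs_of_pos ht']
      _ ≤ volume ((1 - t) • A + t • B) :=
          bmc_one_dim_sum _ _ (hAm.const_smul_of_ne_zero ht'.ne') (hBm.const_smul_of_ne_zero ht.ne')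
            (hAne.smul_set) (hBne.smul_set)
      _ ≤ volume {x : ℝ | u < h' x} := measure_mono hsub
  -- integrate the superlevel inequality
  have hmeasf' : Measurable fun s : ℝ => volume {x | ENNReal.ofReal s < f' x} := by
    apply Antitone.measurable
    intro s1 s2 h12
    exact measure_mono fun x hx => lt_of_le_of_lt (ENNReal.ofReal_le_ofReal h12) hx
  have hmeasg' : Measurable fun s : ℝ => volume {x | ENNReal.ofReal s < g' x} := by
    apply Antitone.measurable
    intro s1 s2 h12
    exact measure_mono fun x hx => lt_of_le_of_lt (ENNReal.ofReal_le_ofReal h12) hx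
  have hint : ENNReal.ofReal (1 - t) * (∫⁻ x, f' x) + ENNReal.ofReal t * (∫⁻ x, g' x)
      ≤ ∫⁻ x, h' x := by
    simp only [bmc_layercake f' hf'm hf'le, bmc_layercake g' hg'm hg'le]
    have hmin : (∫⁻ x, min (h' x) 1) ≤ ∫⁻ x, h' x := lintegral_mono fun x => min_le_left _ _
    refine le_trans ?_ hmin
    simp only [bmc_layercake (fun x => min (h' x) 1) (hh'm.min measurable_const)
      (fun x => min_le_right _ _)]
    rw [← lintegral_const_mul _ hmeasf', ← lintegral_const_mul _ hmeasg',
      ← lintegral_add_left (hmeasf'.const_mul _)]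
    apply setLIntegral_mono' measurableSet_Ioo
    intro s hs
    refine le_trans (key s hs) (measure_mono fun x hx => ?_)
    have hu1 : ENNReal.ofReal s < 1 := by
      rw [← ENNReal.ofReal_one]
      exact ENNReal.ofReal_lt_ofReal_iff_of_nonneg hs.1.le |>.mpr hs.2
    exact lt_min hx hu1
  -- unnormalize
  have hintf' : (∫⁻ x, f' x) = M⁻¹ * ∫⁻ x, f x := by rw [hf']; exact lintegral_const_mul _ hf
  have hintg' : (∫⁻ x, g' x) = N⁻¹ * ∫⁻ x, g x := by rw [hg']; exact lintegral_const_mul _ hg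
  have hinth' : (∫⁻ x, h' x) = c⁻¹ * ∫⁻ x, h x := by rw [hh']; exact lintegral_const_mul _ hh
  -- AM-GM
  have hf'fin : (∫⁻ x, f' x) ≠ ⊤ := by
    rw [hintf']; exact ENNReal.mul_ne_top (ENNReal.inv_ne_top.mpr hM0) hfint
  have hg'fin : (∫⁻ x, g' x) ≠ ⊤ := by
    rw [hintg']; exact ENNReal.mul_ne_top (ENNReal.inv_ne_top.mpr hN0) hgint
  have amgm : (∫⁻ x, f' x) ^ (1 - t) * (∫⁻ x, g' x) ^ t
      ≤ ENNReal.ofReal (1 - t) * (∫⁻ x, f' x) + ENNReal.ofReal t * (∫⁻ x, g' x) :=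
    bmc_amgm _ _ hf'fin hg'fin ht ht1
  -- conclude
  have main' : (∫⁻ x, f' x) ^ (1 - t) * (∫⁻ x, g' x) ^ t ≤ c⁻¹ * ∫⁻ x, h x := by
    rw [← hinth']
    exact le_trans amgm hint
  have expand : (∫⁻ x, f x) ^ (1 - t) * (∫⁻ x, g x) ^ t
      = c * ((∫⁻ x, f' x) ^ (1 - t) * (∫⁻ x, g' x) ^ t) := by
    rw [hintf', hintg', ENNReal.mul_rpow_of_nonneg _ _ ht'.le,
      ENNReal.mul_rpow_of_nonneg _ _ ht.le, ENNReal.inv_rpow, ENNReal.inv_rpow, hc]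
    have hM' : (M ^ (1 - t))⁻¹ * (M ^ (1-t)) = 1 := ENNReal.inv_mul_cancel
      (by simp [ENNReal.rpow_eq_zero_iff, hM0, hfsup, ht'.ne', ht'])
      (ENNReal.rpow_ne_top_of_nonneg ht'.le hfsup)
    have hN' : (N ^ t)⁻¹ * (N ^ t) = 1 := ENNReal.inv_mul_cancel
      (by simp [ENNReal.rpow_eq_zero_iff, hN0, hgsup, ht.ne', ht])
      (ENNReal.rpow_ne_top_of_nonneg ht.le hgsup)
    calc (∫⁻ x, f x) ^ (1-t) * (∫⁻ x, g x) ^ t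
        = ((M ^ (1-t))⁻¹ * (M ^ (1-t))) * (∫⁻ x, f x) ^ (1-t)
          * (((N ^ t)⁻¹ * (N ^ t)) * (∫⁻ x, g x) ^ t) := by rw [hM', hN']; ring
      _ = M ^ (1-t) * N ^ t * ((M ^ (1-t))⁻¹ * (∫⁻ x, f x) ^ (1-t)
          * ((N ^ t)⁻¹ * (∫⁻ x, g x) ^ t)) := by ring
  rw [expand]
  calc c * ((∫⁻ x, f' x) ^ (1 - t) * (∫⁻ x, g' x) ^ t)
      ≤ c * (c⁻¹ * ∫⁻ x, h x) := mul_le_mul_right main' c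
    _ = ∫⁻ x, h x := by
        rw [← mul_assoc, ENNReal.mul_inv_cancel hc0 hctop, one_mul]

/-- 1-D Prékopa–Leindler. -/
lemma bmc_PL1 {t : ℝ} (ht : 0 < t) (ht1 : t < 1)
    (f g h : ℝ → ℝ≥0∞) (hf : Measurable f) (hg : Measurable g) (hh : Measurable h)
    (hyp : ∀ x y : ℝ, f x ^ (1 - t) * g y ^ t ≤ h ((1 - t) • x + t • y)) :
    (∫⁻ x, f x) ^ (1 - t) * (∫⁻ x, g x) ^ t ≤ ∫⁻ x, h x := by
  have ht' : 0 < 1 - t := by linarith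
  classical
  set F : ℕ → ℝ → ℝ≥0∞ :=
    fun k x => (Icc (-(k:ℝ)) k).indicator (fun y => min (f y) k) x with hF
  set G : ℕ → ℝ → ℝ≥0∞ :=
    fun k x => (Icc (-(k:ℝ)) k).indicator (fun y => min (g y) k) x with hG
  have hFm : ∀ k, Measurable (F k) := fun k =>
    (hf.min measurable_const).indicator measurableSet_Icc
  have hGm : ∀ k, Measurable (G k) := fun k =>
    (hg.min measurable_const).indicator measurableSet_Icc
  have hFle : ∀ k x, F k x ≤ f x := by
    intro k x
    by_cases hx : x ∈ Icc (-(k:ℝ)) k <;> simp [hF, hx, min_le_left]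
  have hGle : ∀ k x, G k x ≤ g x := by
    intro k x
    by_cases hx : x ∈ Icc (-(k:ℝ)) k <;> simp [hG, hx, min_le_left]
  -- generic facts about this truncation
  have trunc_mono : ∀ (φ : ℝ → ℝ≥0∞),
      Monotone (fun k : ℕ => fun x => (Icc (-(k:ℝ)) k).indicator (fun y => min (φ y) k) x) := by
    intro φ k1 k2 hk x
    simp only []
    by_cases hx : x ∈ Icc (-(k1:ℝ)) k1
    · have hx2 : x ∈ Icc (-(k2:ℝ)) k2 := by
        rcases hx with ⟨h1, h2⟩
        have : (k1:ℝ) ≤ k2 := by exact_mod_cast hk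
        exact ⟨by linarith, by linarith⟩
      simp only [indicator_of_mem hx, indicator_of_mem hx2]
      exact min_le_min le_rfl (by exact_mod_cast hk)
    · simp [indicator_of_notMem hx]
  have trunc_sup : ∀ (φ : ℝ → ℝ≥0∞) (x : ℝ),
      (⨆ k : ℕ, (Icc (-(k:ℝ)) k).indicator (fun y => min (φ y) k) x) = φ x := by
    intro φ x
    apply le_antisymm
    · refine iSup_le fun k => ?_
      by_cases hx : x ∈ Icc (-(k:ℝ)) k <;> simp [hx, min_le_left]
    · have h2 : φ x = ⨆ m : ℕ, min (φ x) m := by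
        apply le_antisymm
        · rcases eq_or_ne (φ x) ⊤ with htop | hne
          · rw [htop]
            exact le_trans (le_of_eq ENNReal.iSup_natCast.symm)
              (iSup_mono fun m => le_inf le_top le_rfl)
          · obtain ⟨m, hm⟩ := exists_nat_ge (φ x).toReal
            refine le_trans ?_ (le_iSup (fun m : ℕ => min (φ x) m) m)
            have : φ x ≤ (m : ℝ≥0∞) := by
              rw [← ENNReal.ofReal_toReal hne]
              calc ENNReal.ofReal (φ x).toReal ≤ ENNReal.ofReal m :=
                    ENNReal.ofReal_le_ofReal hm
                _ = (m : ℝ≥0∞) := ENNReal.ofReal_natCast m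
            simp [this]
        · exact iSup_le fun m => min_le_left _ _
      rw [h2]
      refine iSup_le fun m => ?_
      obtain ⟨j, hj⟩ := exists_nat_ge |x|
      set k := max m j with hk
      have hxk : x ∈ Icc (-(k:ℝ)) k := by
        have h3 : |x| ≤ (k:ℝ) := le_trans hj (by exact_mod_cast le_max_right m j)
        rw [abs_le] at h3
        exact ⟨by linarith [h3.1], h3.2⟩
      calc min (φ x) m ≤ min (φ x) k :=
            min_le_min le_rfl (by exact_mod_cast le_max_left m j)
        _ = (Icc (-(k:ℝ)) k).indicator (fun y => min (φ y) k) x := by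
            rw [indicator_of_mem hxk]
        _ ≤ ⨆ k : ℕ, (Icc (-(k:ℝ)) k).indicator (fun y => min (φ y) k) x :=
            le_iSup (fun k : ℕ => (Icc (-(k:ℝ)) k).indicator (fun y => min (φ y) k) x) k
  have trunc_int : ∀ (φ : ℝ → ℝ≥0∞) (hφ : Measurable φ) (k : ℕ),
      (∫⁻ x, (Icc (-(k:ℝ)) k).indicator (fun y => min (φ y) k) x) ≠ ⊤ := by
    intro φ hφ k
    rw [lintegral_indicator measurableSet_Icc]
    have : (∫⁻ x in Icc (-(k:ℝ)) k, min (φ x) k) ≤ ∫⁻ _ in Icc (-(k:ℝ)) k, (k:ℝ≥0∞) :=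
      setLIntegral_mono' measurableSet_Icc fun x _ => min_le_right _ _
    refine ne_top_of_le_ne_top ?_ this
    rw [setLIntegral_const]
    exact ENNReal.mul_ne_top (ENNReal.natCast_ne_top k)
      (by rw [Real.volume_Icc]; exact ENNReal.ofReal_ne_top)
  have trunc_bdd : ∀ (φ : ℝ → ℝ≥0∞) (k : ℕ),
      (⨆ x, (Icc (-(k:ℝ)) k).indicator (fun y => min (φ y) k) x) ≠ ⊤ := by
    intro φ k
    refine ne_top_of_le_ne_top (ENNReal.natCast_ne_top k) (iSup_le fun x => ?_)
    by_cases hx : x ∈ Icc (-(k:ℝ)) k <;> simp [hx, min_le_right]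
  -- apply auxiliary lemma at each level k
  have hk : ∀ k : ℕ, (∫⁻ x, F k x) ^ (1 - t) * (∫⁻ x, G k x) ^ t ≤ ∫⁻ x, h x := by
    intro k
    apply bmc_PL1_aux ht ht1 (F k) (G k) h (hFm k) (hGm k) hh
      (trunc_bdd f k) (trunc_bdd g k) (trunc_int f hf k) (trunc_int g hg k)
    intro x y
    refine le_trans ?_ (hyp x y)
    exact mul_le_mul' (ENNReal.rpow_le_rpow (hFle k x) ht'.le)
      (ENNReal.rpow_le_rpow (hGle k y) ht.le)
  -- pass to the limit
  have hFint : (∫⁻ x, f x) = ⨆ k, ∫⁻ x, F k x := by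
    rw [← lintegral_iSup hFm (fun k1 k2 h12 => trunc_mono f h12)]
    exact lintegral_congr fun x => (trunc_sup f x).symm
  have hGint : (∫⁻ x, g x) = ⨆ k, ∫⁻ x, G k x := by
    rw [← lintegral_iSup hGm (fun k1 k2 h12 => trunc_mono g h12)]
    exact lintegral_congr fun x => (trunc_sup g x).symm
  rw [hFint, hGint, bmc_iSup_rpow _ ht', bmc_iSup_rpow _ ht, bmc_iSup_mul_iSup]
  · exact iSup_le hk
  · intro k1 k2 h12
    exact ENNReal.rpow_le_rpow (lintegral_mono (trunc_mono f h12)) ht'.le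
  · intro k1 k2 h12
    exact ENNReal.rpow_le_rpow (lintegral_mono (trunc_mono g h12)) ht.le

/-- n-dimensional Prékopa–Leindler inequality. -/
lemma bmc_PL (n : ℕ) {t : ℝ} (ht : 0 < t) (ht1 : t < 1)
    (f g h : (Fin n → ℝ) → ℝ≥0∞) (hf : Measurable f) (hg : Measurable g) (hh : Measurable h)
    (hyp : ∀ x y, f x ^ (1 - t) * g y ^ t ≤ h ((1 - t) • x + t • y)) :
    (∫⁻ x, f x) ^ (1 - t) * (∫⁻ x, g x) ^ t ≤ ∫⁻ x, h x := by
  induction n with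
  | zero =>
    have huniv : volume (univ : Set (Fin 0 → ℝ)) = 1 := by
      rw [MeasureTheory.volume_pi, Measure.pi_univ]
      simp
    have hint : ∀ φ : (Fin 0 → ℝ) → ℝ≥0∞, (∫⁻ x, φ x) = φ default := by
      intro φ
      have hφ : φ = fun _ => φ default := funext fun x => by rw [Subsingleton.elim x default]
      rw [hφ, lintegral_const, huniv, mul_one]
    rw [hint f, hint g, hint h]
    have := hyp default default
    rwa [Subsingleton.elim ((1 - t) • (default : Fin 0 → ℝ) + t • default) default] at this
  | succ n ih =>
    set e := MeasurableEquiv.piFinSuccAbove (fun _ : Fin (n+1) => ℝ) 0 with he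
    have hmp : MeasurePreserving e volume volume :=
      volume_preserving_piFinSuccAbove (fun _ : Fin (n+1) => ℝ) 0
    have hsymm : ∀ (a : ℝ) (z : Fin n → ℝ), e.symm (a, z) = Fin.insertNth 0 a z := by
      intro a z
      rfl
    have hlin : ∀ (a b : ℝ) (x y : Fin n → ℝ),
        (1 - t) • e.symm (a, x) + t • e.symm (b, y)
          = e.symm ((1 - t) * a + t * b, (1 - t) • x + t • y) := by
      intro a b x y
      rw [hsymm, hsymm, hsymm]
      funext i
      refine Fin.succAboveCases 0 ?_ ?_ i
      · simp [Fin.insertNth_apply_same]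
      · intro j
        simp [Fin.insertNth_apply_succAbove]
    set F : ℝ → ℝ≥0∞ := fun a => ∫⁻ z, f (e.symm (a, z)) with hFdef
    set G : ℝ → ℝ≥0∞ := fun a => ∫⁻ z, g (e.symm (a, z)) with hGdef
    set H : ℝ → ℝ≥0∞ := fun a => ∫⁻ z, h (e.symm (a, z)) with hHdef
    have hfm : Measurable (f ∘ e.symm) := hf.comp e.symm.measurable
    have hgm : Measurable (g ∘ e.symm) := hg.comp e.symm.measurable
    have hhm : Measurable (h ∘ e.symm) := hh.comp e.symm.measurable
    have hFm : Measurable F := hfm.lintegral_prod_right'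
    have hGm : Measurable G := hgm.lintegral_prod_right'
    have hHm : Measurable H := hhm.lintegral_prod_right'
    have hint : ∀ (φ : (Fin (n+1) → ℝ) → ℝ≥0∞), Measurable φ →
        (∫⁻ x, φ x) = ∫⁻ a, ∫⁻ z, φ (e.symm (a, z)) := by
      intro φ hφ
      have h1 : (∫⁻ z : ℝ × (Fin n → ℝ), φ (e.symm z)) = ∫⁻ x, φ x :=
        (hmp.symm).lintegral_comp hφ
      rw [← h1]
      exact lintegral_prod _ (hφ.comp e.symm.measurable).aemeasurable
    rw [hint f hf, hint g hg, hint h hh]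
    apply bmc_PL1 ht ht1 F G H hFm hGm hHm
    intro a b
    have key : ∀ x y : Fin n → ℝ,
        f (e.symm (a, x)) ^ (1 - t) * g (e.symm (b, y)) ^ t
          ≤ h (e.symm ((1 - t) * a + t * b, (1 - t) • x + t • y)) := by
      intro x y
      rw [← hlin]
      exact hyp _ _
    have hsecf : Measurable fun x : Fin n → ℝ => f (e.symm (a, x)) :=
      hfm.comp measurable_prodMk_left
    have hsecg : Measurable fun y : Fin n → ℝ => g (e.symm (b, y)) :=
      hgm.comp measurable_prodMk_left
    have hsech : Measurable fun z : Fin n → ℝ => h (e.symm ((1 - t) * a + t * b, z)) :=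
      hhm.comp measurable_prodMk_left
    have hconc := ih (fun x => f (e.symm (a, x))) (fun y => g (e.symm (b, y)))
      (fun z => h (e.symm ((1 - t) * a + t * b, z))) hsecf hsecg hsech key
    simpa [hFdef, hGdef, hHdef, smul_eq_mul] using hconc

/-- Multiplicative Brunn–Minkowski for compact sets. -/
lemma bmc_BM_mul (n : ℕ) {t : ℝ} (ht : 0 < t) (ht1 : t < 1)
    (A B : Set (Fin n → ℝ)) (hA : IsCompact A) (hB : IsCompact B) :
    volume A ^ (1 - t) * volume B ^ t ≤ volume ((1 - t) • A + t • B) := by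
  have ht' : 0 < 1 - t := by linarith
  classical
  set S := (1 - t) • A + t • B with hS
  have hAc : IsCompact ((1 - t) • A) := hA.image (continuous_const_smul _)
  have hBc : IsCompact (t • B) := hB.image (continuous_const_smul _)
  have hScomp : IsCompact S := hAc.add hBc
  have hAm : MeasurableSet A := hA.isClosed.measurableSet
  have hBm : MeasurableSet B := hB.isClosed.measurableSet
  have hSm : MeasurableSet S := hScomp.isClosed.measurableSet
  have key := bmc_PL n ht ht1 (A.indicator 1) (B.indicator 1) (S.indicator 1)
    (measurable_one.indicator hAm) (measurable_one.indicator hBm)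
    (measurable_one.indicator hSm) ?_
  · rwa [lintegral_indicator_one hAm, lintegral_indicator_one hBm,
      lintegral_indicator_one hSm] at key
  intro x y
  by_cases hx : x ∈ A
  · by_cases hy : y ∈ B
    · have hmem : (1 - t) • x + t • y ∈ S := by
        exact ⟨(1 - t) • x, ⟨x, hx, rfl⟩, t • y, ⟨y, hy, rfl⟩, rfl⟩
      simp [indicator_of_mem hx, indicator_of_mem hy, indicator_of_mem hmem]
    · simp [indicator_of_notMem hy, ENNReal.zero_rpow_of_pos ht]
  · simp [indicator_of_notMem hx, ENNReal.zero_rpow_of_pos ht']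

/-- Additive (sharp) Brunn–Minkowski for compact sets of positive volume. -/
lemma bmc_BM_add (n : ℕ) (hn : 1 ≤ n) (K L : Set (Fin n → ℝ)) (hK : IsCompact K)
    (hL : IsCompact L) (hKpos : 0 < volume K) (hLpos : 0 < volume L) :
    (volume K).toReal ^ ((1:ℝ)/n) + (volume L).toReal ^ ((1:ℝ)/n)
      ≤ (volume (K + L)).toReal ^ ((1:ℝ)/n) := by
  have hn0 : n ≠ 0 := by omega
  have hfinK : volume K ≠ ⊤ := hK.measure_lt_top.ne
  have hfinL : volume L ≠ ⊤ := hL.measure_lt_top.ne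
  set a := (volume K).toReal with hadef
  set b := (volume L).toReal with hbdef
  have ha : 0 < a := ENNReal.toReal_pos hKpos.ne' hfinK
  have hb : 0 < b := ENNReal.toReal_pos hLpos.ne' hfinL
  set k := a ^ ((1:ℝ)/n) with hkdef
  set l := b ^ ((1:ℝ)/n) with hldef
  have hk : 0 < k := Real.rpow_pos_of_pos ha _
  have hl : 0 < l := Real.rpow_pos_of_pos hb _
  have hkl : 0 < k + l := by linarith
  set t := l / (k + l) with htdef
  have ht : 0 < t := div_pos hl hkl
  have ht1 : t < 1 := by
    rw [htdef, div_lt_one hkl]; linarith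
  have ht' : 0 < 1 - t := by linarith
  have h1t : 1 - t = k / (k + l) := by
    rw [htdef]; field_simp; ring
  -- rescaled sets
  set A := (1 - t)⁻¹ • K with hAdef
  set B := t⁻¹ • L with hBdef
  have hAc : IsCompact A := hK.image (continuous_const_smul _)
  have hBc : IsCompact B := hL.image (continuous_const_smul _)
  have hback : (1 - t) • A + t • B = K + L := by
    rw [hAdef, hBdef, smul_smul, smul_smul, mul_inv_cancel₀ ht'.ne', mul_inv_cancel₀ ht.ne',
      one_smul, one_smul]
  have hbm := bmc_BM_mul n ht ht1 A B hAc hBc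
  rw [hback] at hbm
  have hfrank : Module.finrank ℝ (Fin n → ℝ) = n := by
    rw [Module.finrank_fintype_fun_eq_card, Fintype.card_fin]
  have hvolA : volume A = ENNReal.ofReal (((1-t)⁻¹)^n) * volume K := by
    rw [hAdef, Measure.addHaar_smul, hfrank, abs_of_pos (by positivity)]
  have hvolB : volume B = ENNReal.ofReal ((t⁻¹)^n) * volume L := by
    rw [hBdef, Measure.addHaar_smul, hfrank, abs_of_pos (by positivity)]
  have hfinKL : volume (K + L) ≠ ⊤ := (hK.add hL).measure_lt_top.ne
  -- convert to real inequality
  have hreal : (((1-t)⁻¹)^n * a) ^ (1 - t) * ((t⁻¹)^n * b) ^ t ≤ (volume (K + L)).toReal := by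
    have hlhs_fin : volume A ^ (1 - t) * volume B ^ t ≠ ⊤ := by
      apply ENNReal.mul_ne_top
      · refine ENNReal.rpow_ne_top_of_nonneg ht'.le ?_
        rw [hvolA]; exact ENNReal.mul_ne_top ENNReal.ofReal_ne_top hfinK
      · refine ENNReal.rpow_ne_top_of_nonneg ht.le ?_
        rw [hvolB]; exact ENNReal.mul_ne_top ENNReal.ofReal_ne_top hfinL
    have := ENNReal.toReal_mono hfinKL hbm
    rw [ENNReal.toReal_mul, ← ENNReal.toReal_rpow, ← ENNReal.toReal_rpow, hvolA, hvolB,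
      ENNReal.toReal_mul, ENNReal.toReal_mul, ENNReal.toReal_ofReal (by positivity),
      ENNReal.toReal_ofReal (by positivity)] at this
    exact this
  have hka : ((1-t)⁻¹)^n * a = (k + l)^n := by
    have h2 : a = k ^ n := (Real.rpow_inv_natCast_pow ha.le hn0).symm.trans (by rw [hkdef, one_div])
    rw [h1t, h2, inv_div, div_pow, div_mul_cancel₀ _ (by positivity)]
  have hlb : (t⁻¹)^n * b = (k + l)^n := by
    have h2 : b = l ^ n := (Real.rpow_inv_natCast_pow hb.le hn0).symm.trans (by rw [hldef, one_div])
    rw [htdef, h2, inv_div, div_pow, div_mul_cancel₀ _ (by positivity)]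
  rw [hka, hlb, ← Real.rpow_add (by positivity : (0:ℝ) < (k+l)^n)] at hreal
  norm_num at hreal
  -- conclude
  have hfinal : ((k + l) ^ n : ℝ) ^ ((1:ℝ)/n) ≤ (volume (K + L)).toReal ^ ((1:ℝ)/n) :=
    Real.rpow_le_rpow (by positivity) hreal (by positivity)
  rw [one_div, Real.pow_rpow_inv_natCast hkl.le hn0] at hfinal
  rw [one_div]
  exact hfinal

set_option maxHeartbeats 2000000

/-- **Brunn–Minkowski inequality for covolumes** of cobounded `C`-convex regions:
`covol(Γ₁)^{1/n} + covol(Γ₂)^{1/n} ≥ covol(Γ₁ + Γ₂)^{1/n}`. -/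
theorem brunn_minkowski_covolume
    (n : ℕ) (hn : 1 ≤ n) (C : Set (Fin n → ℝ))
    (hCclosed : IsClosed C) (hCconvex : Convex ℝ C) (hC0 : (0 : Fin n → ℝ) ∈ C)
    (hCadd : ∀ x ∈ C, ∀ y ∈ C, x + y ∈ C)
    (hCsmul : ∀ x ∈ C, ∀ t : ℝ, 0 ≤ t → t • x ∈ C)
    (hCsalient : ∀ x ∈ C, -x ∈ C → x = 0)
    (hCfull : (interior C).Nonempty)
    (Γ₁ Γ₂ : Set (Fin n → ℝ))
    (hΓ₁closed : IsClosed Γ₁) (hΓ₁convex : Convex ℝ Γ₁) (hΓ₁sub : Γ₁ ⊆ C)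
    (hΓ₁reg : Γ₁ + C ⊆ Γ₁) (hΓ₁cobdd : Bornology.IsBounded (C \ Γ₁))
    (hΓ₂closed : IsClosed Γ₂) (hΓ₂convex : Convex ℝ Γ₂) (hΓ₂sub : Γ₂ ⊆ C)
    (hΓ₂reg : Γ₂ + C ⊆ Γ₂) (hΓ₂cobdd : Bornology.IsBounded (C \ Γ₂)) :
    (volume (C \ (Γ₁ + Γ₂))).toReal ^ ((1 : ℝ) / n) ≤
      (volume (C \ Γ₁)).toReal ^ ((1 : ℝ) / n) +
        (volume (C \ Γ₂)).toReal ^ ((1 : ℝ) / n) := by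
  classical
  have hn0 : n ≠ 0 := by omega
  set a := (volume (C \ Γ₁)).toReal with hadef
  set b := (volume (C \ Γ₂)).toReal with hbdef
  have hm1 : MeasurableSet (C \ Γ₁) := hCclosed.measurableSet.diff hΓ₁closed.measurableSet
  have hm2 : MeasurableSet (C \ Γ₂) := hCclosed.measurableSet.diff hΓ₂closed.measurableSet
  have hfin1 : volume (C \ Γ₁) ≠ ⊤ := hΓ₁cobdd.measure_lt_top.ne
  have hfin2 : volume (C \ Γ₂) ≠ ⊤ := hΓ₂cobdd.measure_lt_top.ne
  have ha0 : 0 ≤ a := ENNReal.toReal_nonneg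
  have hb0 : 0 ≤ b := ENNReal.toReal_nonneg
  have hfrank : Module.finrank ℝ (Fin n → ℝ) = n := by
    rw [Module.finrank_fintype_fun_eq_card, Fintype.card_fin]
  -- the unit truncated cone has positive finite volume
  set V₁ := volume (C ∩ Metric.closedBall 0 1) with hV1def
  have hV1fin : V₁ ≠ ⊤ :=
    ((Metric.isBounded_closedBall).subset inter_subset_right).measure_lt_top.ne
  have hV1pos : 0 < V₁ := by
    obtain ⟨z, hz⟩ := hCfull
    set ε := 1 / (2 * (‖z‖ + 1)) with hε
    have hzn : 0 ≤ ‖z‖ := norm_nonneg z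
    have hε0 : 0 < ε := by positivity
    have hε1 : ε ≤ 1 := by
      rw [hε, div_le_one (by positivity)]
      linarith
    have hzmem : ε • z ∈ interior C := by
      have := hCconvex.combo_interior_self_mem_interior (a := ε) (b := 1 - ε) hz hC0 hε0
        (by linarith) (by ring)
      simpa using this
    have hznorm : ‖ε • z‖ < 1 := by
      rw [norm_smul, Real.norm_eq_abs, abs_of_pos hε0, hε]
      rw [div_mul_eq_mul_div, div_lt_one (by positivity)]
      linarith
    have hU : IsOpen (interior C ∩ Metric.ball 0 1) := isOpen_interior.inter Metric.isOpen_ball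
    have hUne : (interior C ∩ Metric.ball 0 1).Nonempty :=
      ⟨ε • z, hzmem, by simpa [Metric.mem_ball, dist_eq_norm] using hznorm⟩
    have hsub : interior C ∩ Metric.ball 0 1 ⊆ C ∩ Metric.closedBall 0 1 :=
      inter_subset_inter interior_subset Metric.ball_subset_closedBall
    exact lt_of_lt_of_le (hU.measure_pos volume hUne) (measure_mono hsub)
  set v := V₁.toReal with hvdef
  have hv : 0 < v := ENNReal.toReal_pos hV1pos.ne' hV1fin
  -- scaling of truncated cones
  have hscale : ∀ r : ℝ, 0 < r →
      volume (C ∩ Metric.closedBall 0 r) = ENNReal.ofReal (r ^ n) * V₁ := by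
    intro r hr
    have hset : C ∩ Metric.closedBall 0 r = r • (C ∩ Metric.closedBall 0 1) := by
      ext x
      constructor
      · rintro ⟨hxC, hxB⟩
        refine ⟨r⁻¹ • x, ⟨hCsmul x hxC r⁻¹ (by positivity), ?_⟩, ?_⟩
        · rw [Metric.mem_closedBall, dist_zero_right] at hxB ⊢
          rw [norm_smul, Real.norm_eq_abs, abs_of_pos (by positivity : (0:ℝ) < r⁻¹)]
          calc r⁻¹ * ‖x‖ ≤ r⁻¹ * r := by
                have hrinv : (0:ℝ) < r⁻¹ := by positivity
                nlinarith
            _ = 1 := inv_mul_cancel₀ hr.ne'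
        · show r • r⁻¹ • x = x
          rw [smul_smul, mul_inv_cancel₀ hr.ne', one_smul]
      · rintro ⟨y, ⟨hyC, hyB⟩, rfl⟩
        refine ⟨hCsmul y hyC r hr.le, ?_⟩
        rw [Metric.mem_closedBall, dist_zero_right] at hyB ⊢
        rw [norm_smul, Real.norm_eq_abs, abs_of_pos hr]
        calc r * ‖y‖ ≤ r * 1 := by nlinarith
          _ = r := mul_one r
    rw [hset, Measure.addHaar_smul, hfrank, abs_of_pos (by positivity)]
  -- bounding radius for the coconvex pieces
  obtain ⟨R₀, hR₀⟩ := (hΓ₁cobdd.union hΓ₂cobdd).subset_closedBall 0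
  set R := max R₀ 1 with hRdef
  have hR1 : (1:ℝ) ≤ R := le_max_right _ _
  have hR0 : 0 < R := lt_of_lt_of_le one_pos hR1
  have hRg1 : C \ Γ₁ ⊆ Metric.closedBall 0 R :=
    (subset_union_left.trans hR₀).trans (Metric.closedBall_subset_closedBall (le_max_left _ _))
  have hRg2 : C \ Γ₂ ⊆ Metric.closedBall 0 R :=
    (subset_union_right.trans hR₀).trans (Metric.closedBall_subset_closedBall (le_max_left _ _))
  -- main estimate for every δ > 0
  have key : ∀ δ : ℝ, 0 < δ → (volume (C \ (Γ₁ + Γ₂))).toReal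
      ≤ ((a + δ) ^ ((1:ℝ)/n) + (b + δ) ^ ((1:ℝ)/n)) ^ n := by
    intro δ hδ
    set T := max 2 (R ^ n * v / δ) with hTdef
    have hT2 : (2:ℝ) ≤ T := le_max_left _ _
    have hT1 : (1:ℝ) ≤ T - 1 := by linarith
    have hT0 : 0 < T := by linarith
    have hTR : R ^ n * v / δ ≤ T := le_max_right _ _
    have hTRn : R ^ n ≤ δ * T / v := by
      rw [le_div_iff₀ hv]
      have h1 : R ^ n * v / δ * δ = R ^ n * v := by field_simp
      nlinarith
    set t := ((a + δ) * T / v) ^ ((1:ℝ)/n) with htdef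
    set s := ((b + δ) * T / v) ^ ((1:ℝ)/n) with hsdef
    have hadT : 0 < (a + δ) * T / v := by positivity
    have hbdT : 0 < (b + δ) * T / v := by positivity
    have ht0 : 0 < t := Real.rpow_pos_of_pos hadT _
    have hs0 : 0 < s := Real.rpow_pos_of_pos hbdT _
    have htn : t ^ n = (a + δ) * T / v := by
      rw [htdef, one_div, Real.rpow_inv_natCast_pow hadT.le hn0]
    have hsn : s ^ n = (b + δ) * T / v := by
      rw [hsdef, one_div, Real.rpow_inv_natCast_pow hbdT.le hn0]
    have hRt : R ≤ t := by
      have h1 : R ^ n ≤ t ^ n := by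
        rw [htn]
        refine le_trans hTRn ?_
        gcongr
        linarith
      calc R = (R ^ n) ^ ((n:ℝ)⁻¹) := (Real.pow_rpow_inv_natCast hR0.le hn0).symm
        _ ≤ (t ^ n) ^ ((n:ℝ)⁻¹) := Real.rpow_le_rpow (by positivity) h1 (by positivity)
        _ = t := Real.pow_rpow_inv_natCast ht0.le hn0
    have hRs : R ≤ s := by
      have h1 : R ^ n ≤ s ^ n := by
        rw [hsn]
        refine le_trans hTRn ?_
        gcongr
        linarith
      calc R = (R ^ n) ^ ((n:ℝ)⁻¹) := (Real.pow_rpow_inv_natCast hR0.le hn0).symm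
        _ ≤ (s ^ n) ^ ((n:ℝ)⁻¹) := Real.rpow_le_rpow (by positivity) h1 (by positivity)
        _ = s := Real.pow_rpow_inv_natCast hs0.le hn0
    set K₁ := Γ₁ ∩ Metric.closedBall 0 t with hK1def
    set K₂ := Γ₂ ∩ Metric.closedBall 0 s with hK2def
    have hK1c : IsCompact K₁ := IsCompact.of_isClosed_subset (isCompact_closedBall 0 t)
      (hΓ₁closed.inter Metric.isClosed_closedBall) inter_subset_right
    have hK2c : IsCompact K₂ := IsCompact.of_isClosed_subset (isCompact_closedBall 0 s)
      (hΓ₂closed.inter Metric.isClosed_closedBall) inter_subset_right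
    have hK1fin : volume K₁ ≠ ⊤ := hK1c.measure_lt_top.ne
    have hK2fin : volume K₂ ≠ ⊤ := hK2c.measure_lt_top.ne
    have hdec1 : C ∩ Metric.closedBall 0 t = K₁ ∪ (C \ Γ₁) := by
      ext x
      constructor
      · rintro ⟨hxC, hxB⟩
        by_cases hxΓ : x ∈ Γ₁
        · exact Or.inl ⟨hxΓ, hxB⟩
        · exact Or.inr ⟨hxC, hxΓ⟩
      · rintro (⟨hxΓ, hxB⟩ | ⟨hxC, hxΓ⟩)
        · exact ⟨hΓ₁sub hxΓ, hxB⟩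
        · exact ⟨hxC, Metric.closedBall_subset_closedBall hRt (hRg1 ⟨hxC, hxΓ⟩)⟩
    have hdec2 : C ∩ Metric.closedBall 0 s = K₂ ∪ (C \ Γ₂) := by
      ext x
      constructor
      · rintro ⟨hxC, hxB⟩
        by_cases hxΓ : x ∈ Γ₂
        · exact Or.inl ⟨hxΓ, hxB⟩
        · exact Or.inr ⟨hxC, hxΓ⟩
      · rintro (⟨hxΓ, hxB⟩ | ⟨hxC, hxΓ⟩)
        · exact ⟨hΓ₂sub hxΓ, hxB⟩
        · exact ⟨hxC, Metric.closedBall_subset_closedBall hRs (hRg2 ⟨hxC, hxΓ⟩)⟩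
    have hdisj1 : Disjoint K₁ (C \ Γ₁) := disjoint_left.mpr fun x hx hx2 => hx2.2 hx.1
    have hdisj2 : Disjoint K₂ (C \ Γ₂) := disjoint_left.mpr fun x hx hx2 => hx2.2 hx.1
    have hvol1 : ENNReal.ofReal (t ^ n) * V₁ = volume K₁ + volume (C \ Γ₁) := by
      rw [← hscale t ht0, hdec1, measure_union hdisj1 hm1]
    have hvol2 : ENNReal.ofReal (s ^ n) * V₁ = volume K₂ + volume (C \ Γ₂) := by
      rw [← hscale s hs0, hdec2, measure_union hdisj2 hm2]
    have hvolK1 : (volume K₁).toReal = (a + δ) * T - a := by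
      have h1 := congrArg ENNReal.toReal hvol1
      rw [ENNReal.toReal_mul, ENNReal.toReal_ofReal (by positivity),
        ENNReal.toReal_add hK1fin hfin1] at h1
      have h2 : t ^ n * V₁.toReal = (a + δ) * T := by
        rw [htn]
        exact div_mul_cancel₀ _ hv.ne'
      rw [← hvdef] at h2
      rw [← hadef, ← hvdef] at h1
      linarith
    have hvolK2 : (volume K₂).toReal = (b + δ) * T - b := by
      have h1 := congrArg ENNReal.toReal hvol2
      rw [ENNReal.toReal_mul, ENNReal.toReal_ofReal (by positivity),
        ENNReal.toReal_add hK2fin hfin2] at h1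
      have h2 : s ^ n * V₁.toReal = (b + δ) * T := by
        rw [hsn]
        exact div_mul_cancel₀ _ hv.ne'
      rw [← hvdef] at h2
      rw [← hbdef, ← hvdef] at h1
      linarith
    have hlow1 : (a + δ) * (T - 1) ≤ (volume K₁).toReal := by rw [hvolK1]; nlinarith
    have hlow2 : (b + δ) * (T - 1) ≤ (volume K₂).toReal := by rw [hvolK2]; nlinarith
    have hvolK1pos : 0 < volume K₁ := by
      have h3 : 0 < (volume K₁).toReal := by rw [hvolK1]; nlinarith
      exact (ENNReal.toReal_pos_iff.mp h3).1
    have hvolK2pos : 0 < volume K₂ := by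
      have h3 : 0 < (volume K₂).toReal := by rw [hvolK2]; nlinarith
      exact (ENNReal.toReal_pos_iff.mp h3).1
    have hBM := bmc_BM_add n hn K₁ K₂ hK1c hK2c hvolK1pos hvolK2pos
    set q := (a + δ) ^ ((1:ℝ)/n) + (b + δ) ^ ((1:ℝ)/n) with hqdef
    have hq0 : 0 < q := by
      have := Real.rpow_pos_of_pos (show (0:ℝ) < a + δ by linarith) ((1:ℝ)/n)
      have := Real.rpow_pos_of_pos (show (0:ℝ) < b + δ by linarith) ((1:ℝ)/n)
      rw [hqdef]
      linarith
    have hsum : (T - 1) ^ ((1:ℝ)/n) * q ≤ (volume (K₁ + K₂)).toReal ^ ((1:ℝ)/n) := by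
      have h1 : ((a + δ) * (T - 1)) ^ ((1:ℝ)/n) ≤ (volume K₁).toReal ^ ((1:ℝ)/n) :=
        Real.rpow_le_rpow (by positivity) hlow1 (by positivity)
      have h2 : ((b + δ) * (T - 1)) ^ ((1:ℝ)/n) ≤ (volume K₂).toReal ^ ((1:ℝ)/n) :=
        Real.rpow_le_rpow (by positivity) hlow2 (by positivity)
      have h3 : ((a + δ) * (T - 1)) ^ ((1:ℝ)/n)
          = (T - 1) ^ ((1:ℝ)/n) * (a + δ) ^ ((1:ℝ)/n) := by
        rw [mul_comm (a + δ), Real.mul_rpow (by linarith) (by linarith)]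
      have h4 : ((b + δ) * (T - 1)) ^ ((1:ℝ)/n)
          = (T - 1) ^ ((1:ℝ)/n) * (b + δ) ^ ((1:ℝ)/n) := by
        rw [mul_comm (b + δ), Real.mul_rpow (by linarith) (by linarith)]
      calc (T - 1) ^ ((1:ℝ)/n) * q
          = ((a + δ) * (T - 1)) ^ ((1:ℝ)/n) + ((b + δ) * (T - 1)) ^ ((1:ℝ)/n) := by
            rw [h3, h4, hqdef]; ring
        _ ≤ (volume K₁).toReal ^ ((1:ℝ)/n) + (volume K₂).toReal ^ ((1:ℝ)/n) := add_le_add h1 h2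
        _ ≤ (volume (K₁ + K₂)).toReal ^ ((1:ℝ)/n) := hBM
    have hKKfin : volume (K₁ + K₂) ≠ ⊤ := (hK1c.add hK2c).measure_lt_top.ne
    have hpow : (T - 1) * q ^ n ≤ (volume (K₁ + K₂)).toReal := by
      have h4 := pow_le_pow_left₀ (by positivity) hsum n
      rw [mul_pow, one_div, Real.rpow_inv_natCast_pow (by linarith) hn0,
        Real.rpow_inv_natCast_pow ENNReal.toReal_nonneg hn0] at h4
      exact h4
    -- containment
    have hsplit : ∀ x ∈ C, x ∉ Metric.closedBall 0 (t + s) → x ∈ Γ₁ + Γ₂ := by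
      intro x hxC hxB
      rw [Metric.mem_closedBall, dist_zero_right, not_le] at hxB
      have hts : 0 < t + s := by linarith
      set u := (t / (t + s)) • x with hu
      set w := (s / (t + s)) • x with hw
      have huC : u ∈ C := hCsmul x hxC _ (by positivity)
      have hwC : w ∈ C := hCsmul x hxC _ (by positivity)
      have hun : t < ‖u‖ := by
        rw [hu, norm_smul, Real.norm_eq_abs, abs_of_pos (by positivity),
          div_mul_eq_mul_div, lt_div_iff₀ hts]
        nlinarith
      have hwn : s < ‖w‖ := by
        rw [hw, norm_smul, Real.norm_eq_abs, abs_of_pos (by positivity),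
          div_mul_eq_mul_div, lt_div_iff₀ hts]
        nlinarith
      have huΓ : u ∈ Γ₁ := by
        by_contra hne
        have h5 := hRg1 ⟨huC, hne⟩
        rw [Metric.mem_closedBall, dist_zero_right] at h5
        linarith
      have hwΓ : w ∈ Γ₂ := by
        by_contra hne
        have h5 := hRg2 ⟨hwC, hne⟩
        rw [Metric.mem_closedBall, dist_zero_right] at h5
        linarith
      refine ⟨u, huΓ, w, hwΓ, ?_⟩
      show u + w = x
      rw [hu, hw, ← add_smul, ← add_div, div_self hts.ne', one_smul]
    have hKsub : K₁ + K₂ ⊆ C ∩ Metric.closedBall 0 (t + s) := by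
      rintro z ⟨p, hp, p', hp', rfl⟩
      refine ⟨hCadd p (hΓ₁sub hp.1) p' (hΓ₂sub hp'.1), ?_⟩
      rw [Metric.mem_closedBall, dist_zero_right]
      have h5 : ‖p‖ ≤ t := by
        have h6 := hp.2
        rwa [Metric.mem_closedBall, dist_zero_right] at h6
      have h6 : ‖p'‖ ≤ s := by
        have h7 := hp'.2
        rwa [Metric.mem_closedBall, dist_zero_right] at h7
      calc ‖p + p'‖ ≤ ‖p‖ + ‖p'‖ := norm_add_le _ _
        _ ≤ t + s := add_le_add h5 h6
    have hKΓ : K₁ + K₂ ⊆ Γ₁ + Γ₂ := Set.add_subset_add inter_subset_left inter_subset_left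
    have hsub2 : C \ (Γ₁ + Γ₂) ⊆ (C ∩ Metric.closedBall 0 (t + s)) \ (K₁ + K₂) := by
      rintro x ⟨hxC, hxΓ⟩
      have hxB : x ∈ Metric.closedBall 0 (t + s) := by
        by_contra hB
        exact hxΓ (hsplit x hxC hB)
      exact ⟨⟨hxC, hxB⟩, fun hx => hxΓ (hKΓ hx)⟩
    have hKKm : MeasurableSet (K₁ + K₂) := (hK1c.add hK2c).isClosed.measurableSet
    have hKKle : volume (K₁ + K₂) ≤ ENNReal.ofReal ((t + s) ^ n) * V₁ := by
      rw [← hscale (t + s) (by linarith)]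
      exact measure_mono hKsub
    have hdiff : volume ((C ∩ Metric.closedBall 0 (t + s)) \ (K₁ + K₂))
        = ENNReal.ofReal ((t + s) ^ n) * V₁ - volume (K₁ + K₂) := by
      rw [measure_diff hKsub hKKm.nullMeasurableSet hKKfin, hscale (t + s) (by linarith)]
    have hCfin : ENNReal.ofReal ((t + s) ^ n) * V₁ ≠ ⊤ :=
      ENNReal.mul_ne_top ENNReal.ofReal_ne_top hV1fin
    have hle : (volume (C \ (Γ₁ + Γ₂))).toReal
        ≤ (t + s) ^ n * v - (volume (K₁ + K₂)).toReal := by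
      have h7 := measure_mono (μ := volume) hsub2
      rw [hdiff] at h7
      have h8 := ENNReal.toReal_mono (ne_top_of_le_ne_top hCfin tsub_le_self) h7
      rwa [ENNReal.toReal_sub_of_le hKKle hCfin, ENNReal.toReal_mul,
        ENNReal.toReal_ofReal (by positivity), ← hvdef] at h8
    have hts_pow : (t + s) ^ n * v = T * q ^ n := by
      have h9 : t = (T / v) ^ ((1:ℝ)/n) * (a + δ) ^ ((1:ℝ)/n) := by
        rw [htdef, show (a + δ) * T / v = (T / v) * (a + δ) by ring,
          Real.mul_rpow (by positivity) (by linarith)]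
      have h10 : s = (T / v) ^ ((1:ℝ)/n) * (b + δ) ^ ((1:ℝ)/n) := by
        rw [hsdef, show (b + δ) * T / v = (T / v) * (b + δ) by ring,
          Real.mul_rpow (by positivity) (by linarith)]
      have h11 : t + s = (T / v) ^ ((1:ℝ)/n) * q := by
        rw [h9, h10, hqdef]; ring
      rw [h11, mul_pow, one_div, Real.rpow_inv_natCast_pow (by positivity) hn0]
      field_simp
    linarith
  -- pass to the limit δ → 0⁺
  have hconc : (volume (C \ (Γ₁ + Γ₂))).toReal ≤ (a ^ ((1:ℝ)/n) + b ^ ((1:ℝ)/n)) ^ n := by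
    have hca : ContinuousAt (fun δ : ℝ => (a + δ) ^ ((1:ℝ)/n)) 0 := by
      have h1 : ContinuousAt (fun δ : ℝ => a + δ) 0 := by fun_prop
      exact (Real.continuousAt_rpow_const (a + 0) _ (Or.inr (by positivity))).comp h1
    have hcb : ContinuousAt (fun δ : ℝ => (b + δ) ^ ((1:ℝ)/n)) 0 := by
      have h1 : ContinuousAt (fun δ : ℝ => b + δ) 0 := by fun_prop
      exact (Real.continuousAt_rpow_const (b + 0) _ (Or.inr (by positivity))).comp h1
    have hcont : ContinuousAt
        (fun δ : ℝ => ((a + δ) ^ ((1:ℝ)/n) + (b + δ) ^ ((1:ℝ)/n)) ^ n) 0 :=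
      (hca.add hcb).pow n
    have hlim : Filter.Tendsto (fun δ : ℝ => ((a + δ) ^ ((1:ℝ)/n) + (b + δ) ^ ((1:ℝ)/n)) ^ n)
        (nhdsWithin 0 (Ioi 0)) (nhds ((a ^ ((1:ℝ)/n) + b ^ ((1:ℝ)/n)) ^ n)) := by
      have h2 := (hcont.continuousWithinAt (s := Ioi (0:ℝ))).tendsto
      simpa using h2
    refine ge_of_tendsto hlim ?_
    filter_upwards [self_mem_nhdsWithin] with δ hδ
    exact key δ hδ
  have hpow_id : ∀ x : ℝ, 0 ≤ x → (x ^ n) ^ ((1:ℝ)/n) = x := by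
    intro x hx
    rw [one_div]
    exact Real.pow_rpow_inv_natCast hx hn0
  have hsum0 : 0 ≤ a ^ ((1:ℝ)/n) + b ^ ((1:ℝ)/n) := by positivity
  have hfinal := Real.rpow_le_rpow ENNReal.toReal_nonneg hconc
    (by positivity : (0:ℝ) ≤ 1 / (n:ℝ))
  rwa [hpow_id _ hsum0] at hfinal
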